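/- Let c > 0, p(L) = L³(c − 2L)(2c − L), and L* = c(1 − √(2/5)). Then p is strictly increasing on the interval (0, L*] and strictly decreasing on the interval [L*, c/2). -/

import Mathlib

/-- For `c > 0`, `p L = L³(c − 2L)(2c − L)` is strictly increasing on `(0, L*]`
and strictly decreasing on `[L*, c/2)`, where `L* = c(1 − √(2/5))`. -/
theorem purcell_monotonicity (c : ℝ) (hc : 0 < c)
    (p : ℝ → ℝ) (hp : ∀ L, p L = L ^ 3 * (c - 2 * L) * (2 * c - L))
    (Lstar : ℝ) (hLstar : Lstar = c * (1 - Real.sqrt (2 / 5))) :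
    StrictMonoOn p (Set.Ioc 0 Lstar) ∧ StrictAntiOn p (Set.Ico Lstar (c / 2)) := by
  set s := Real.sqrt (2 / 5) with hs
  have hs2 : s ^ 2 = 2 / 5 := Real.sq_sqrt (by norm_num)
  have hs0 : 0 ≤ s := Real.sqrt_nonneg _
  have hs1 : s < 1 := by nlinarith
  have hshalf : 1 / 2 < s := by nlinarith
  have hp' : p = fun L => 2 * c ^ 2 * L ^ 3 - 5 * c * L ^ 4 + 2 * L ^ 5 := by
    funext L; rw [hp]; ring
  have hcont : Continuous p := by rw [hp']; continuity
  have hderiv : ∀ x : ℝ, HasDerivAt p (6 * c ^ 2 * x ^ 2 - 20 * c * x ^ 3 + 10 * x ^ 4) x := by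
    intro x
    rw [hp']
    have h1 := ((hasDerivAt_pow 3 x).const_mul (2 * c ^ 2)).sub
      ((hasDerivAt_pow 4 x).const_mul (5 * c)) |>.add ((hasDerivAt_pow 5 x).const_mul 2)
    refine h1.congr_deriv ?_
    push_cast; ring
  have hfact : ∀ x : ℝ, 6 * c ^ 2 * x ^ 2 - 20 * c * x ^ 3 + 10 * x ^ 4
      = 2 * x ^ 2 * 5 * (x - Lstar) * (x - c * (1 + s)) := by
    intro x; rw [hLstar]; linear_combination 10 * c ^ 2 * x ^ 2 * hs2
  constructor
  · apply strictMonoOn_of_deriv_pos (convex_Ioc 0 Lstar) hcont.continuousOn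
    intro x hx
    rw [interior_Ioc] at hx
    rw [(hderiv x).deriv, hfact x]
    have hx0 : 0 < x := hx.1
    have hx1 : x < Lstar := hx.2
    have hls : Lstar < c * (1 + s) := by rw [hLstar]; nlinarith
    nlinarith [mul_pos (mul_pos (mul_pos hx0 hx0) (sub_pos.2 hx1)) (sub_pos.2 (hx1.trans hls))]
  · apply strictAntiOn_of_deriv_neg (convex_Ico Lstar (c / 2)) hcont.continuousOn
    intro x hx
    rw [interior_Ico] at hx
    rw [(hderiv x).deriv, hfact x]
    have hx1 : Lstar < x := hx.1
    have hx2 : x < c / 2 := hx.2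
    have hx0 : 0 < x := lt_of_le_of_lt (by rw [hLstar]; nlinarith) hx1
    have hls : x < c * (1 + s) := by nlinarith
    nlinarith [mul_pos (mul_pos (mul_pos hx0 hx0) (sub_pos.2 hx1)) (sub_pos.2 hls)]
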